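/- The map sending a permutation of [n] (with distinct entries) to its Cartesian tree induces a bijection between the set of possible answer functions of range-minimum queries on arrays of length n and binary trees with n nodes; in particular, for any array A of n distinct numbers, rmq_A(i,j) equals the inorder rank of the lowest common ancestor in the Cartesian tree of A of the nodes with inorder ranks i and j. -/

import Mathlib

open Filter Real

/-- Binary trees: empty (`leaf`) or a node with left and right subtrees. -/
inductive BinTree where
  | leaf : BinTree
  | node : BinTree → BinTree → BinTree
deriving DecidableEq, Repr

namespace BinTree

/-- Number of nodes. -/
def size : BinTree → ℕ
  | leaf => 0
  | node l r => l.size + r.size + 1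

/-- Product of subtree sizes over all nodes: `∏_{v∈t} st(v)`. -/
def stProd : BinTree → ℕ
  | leaf => 1
  | node l r => (node l r).size * l.stProd * r.stProd

/-- Subtree-size entropy: `H_st(t) = ∑_{v∈t} lg st(v)`. -/
noncomputable def stEntropy : BinTree → ℝ
  | leaf => 0
  | node l r => Real.logb 2 ((node l r).size : ℝ) + l.stEntropy + r.stEntropy

/-- Size of the left subtree of the root. -/
def leftSize : BinTree → ℕ
  | leaf => 0
  | node l _ => l.size

/-- Every node has at most one (nonempty) child. -/
def isPath : BinTree → Prop
  | leaf => True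
  | node l r => (l = leaf ∨ r = leaf) ∧ l.isPath ∧ r.isPath

/-- At every node the sizes of the two subtrees differ by at most 1. -/
def isBalanced : BinTree → Prop
  | leaf => True
  | node l r => ((l.size : ℤ) - (r.size : ℤ)).natAbs ≤ 1 ∧ l.isBalanced ∧ r.isBalanced

/-- Number of leaves (nodes with no children). -/
def leafCount : BinTree → ℕ
  | leaf => 0
  | node l r => (if l = leaf ∧ r = leaf then 1 else 0) + l.leafCount + r.leafCount

/-- Number of binary nodes (both children present). -/
def binCount : BinTree → ℕ
  | leaf => 0
  | node l r => (if l ≠ leaf ∧ r ≠ leaf then 1 else 0) + l.binCount + r.binCount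

/-- Number of nodes with only a left child. -/
def leftOnlyCount : BinTree → ℕ
  | leaf => 0
  | node l r => (if l ≠ leaf ∧ r = leaf then 1 else 0) + l.leftOnlyCount + r.leftOnlyCount

/-- Number of nodes with only a right child. -/
def rightOnlyCount : BinTree → ℕ
  | leaf => 0
  | node l r => (if l = leaf ∧ r ≠ leaf then 1 else 0) + l.rightOnlyCount + r.rightOnlyCount

end BinTree

/-- Cartesian tree construction with explicit fuel (fuel ≥ length suffices). -/
def cartesianAux : ℕ → List ℕ → BinTree
  | 0, _ => .leaf
  | _ + 1, [] => .leaf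
  | fuel + 1, x :: xs =>
      let m := List.foldl min x xs
      let i := (x :: xs).idxOf m
      .node (cartesianAux fuel ((x :: xs).take i)) (cartesianAux fuel ((x :: xs).drop (i + 1)))

/-- The Cartesian tree of a list: root at the (first) minimum, left/right
subtrees built recursively from the prefix/suffix. -/
def cartesian (l : List ℕ) : BinTree := cartesianAux l.length l

/-- The array `A[1..n]` (as a list) associated with a permutation of `Fin n`. -/
def permList {n : ℕ} (p : Equiv.Perm (Fin n)) : List ℕ := List.ofFn fun k => (p k : ℕ)

/-- All binary trees with exactly `n` nodes. -/
def treesOfSize : ℕ → Finset BinTree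
  | 0 => {BinTree.leaf}
  | n + 1 =>
    (Finset.range (n + 1)).attach.biUnion fun i =>
      ((treesOfSize i.1) ×ˢ (treesOfSize (n - i.1))).image fun p => BinTree.node p.1 p.2
termination_by n => n
decreasing_by
  · exact Nat.lt_succ_of_le (Nat.le_of_lt_succ (Finset.mem_range.mp i.2))
  · exact Nat.lt_succ_of_le (Nat.sub_le n i.1)

/-- Shannon entropy (base 2) of the random-BST shape distribution on `n` nodes,
which assigns probability `1/stProd t` to each tree `t` on `n` nodes. -/
noncomputable def shapeEntropy (n : ℕ) : ℝ :=
  - ∑ t ∈ treesOfSize n, (1 / (t.stProd : ℝ)) * Real.logb 2 (1 / (t.stProd : ℝ))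

/-- Expectation of `f` under the random-BST shape distribution on `n` nodes. -/
noncomputable def expCount (f : BinTree → ℕ) (n : ℕ) : ℝ :=
  ∑ t ∈ treesOfSize n, (1 / (t.stProd : ℝ)) * (f t : ℝ)

/-- The entropy recurrence: `H 0 = H 1 = 0`, `H n = lg n + (2/n) ∑_{i<n} H i`. -/
noncomputable def Hrec : ℕ → ℝ
  | 0 => 0
  | 1 => 0
  | n + 2 =>
      Real.logb 2 ((n + 2 : ℕ) : ℝ) +
        (2 / ((n + 2 : ℕ) : ℝ)) * ∑ i ∈ (Finset.range (n + 2)).attach, Hrec i.1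
termination_by n => n
decreasing_by exact Finset.mem_range.mp i.2

/-- `rmq_A(i,j)` (1-based): the position of the (first) minimum of `A[i..j]`. -/
def rmqFun (A : List ℕ) (i j : ℕ) : ℕ :=
  let s := (A.drop (i - 1)).take (j - i + 1)
  i + s.idxOf (List.foldl min (s.headD 0) s)

/-- The inorder rank of the LCA of the nodes with inorder ranks `i` and `j`. -/
def lcaInorder : BinTree → ℕ → ℕ → ℕ
  | .leaf, _, _ => 0
  | .node l r, i, j =>
      let m := l.size + 1
      if i < m ∧ j < m then lcaInorder l i j
      else if m < i ∧ m < j then m + lcaInorder r (i - m) (j - m)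
      else m

/-- The subtree rooted at the node reached from the root by the given
left(`false`)/right(`true`) directions, if it exists. -/
def subAt : BinTree → List Bool → Option BinTree
  | t, [] => some t
  | .leaf, _ :: _ => none
  | .node l _, false :: p => subAt l p
  | .node _ r, true :: p => subAt r p

/-- Subtree size of the node at a position (0 if there is no node there). -/
def stAt (t : BinTree) (pos : List Bool) : ℕ := ((subAt t pos).getD .leaf).size

/-- Left-subtree size of the node at a position. -/
def lsAt (t : BinTree) (pos : List Bool) : ℕ := ((subAt t pos).getD .leaf).leftSize

/-- `Pruned μ s`: `μ` is obtained from `s` by replacing some subtrees by `leaf`. -/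
inductive Pruned : BinTree → BinTree → Prop
  | leaf (t) : Pruned .leaf t
  | node {l' r' l r} : Pruned l' l → Pruned r' r → Pruned (.node l' r') (.node l r)

/-- `PrunedN k μ s`: `μ` is obtained from `s` by pruning exactly `k` (nonempty) subtrees. -/
inductive PrunedN : ℕ → BinTree → BinTree → Prop
  | refl (t) : PrunedN 0 t t
  | prune (l r) : PrunedN 1 .leaf (.node l r)
  | node {a b l' r' l r} : PrunedN a l' l → PrunedN b r' r → PrunedN (a + b) (.node l' r') (.node l r)

/-- `IsSubtree s t`: `s` is the subtree of `t` rooted at some node (or `t` itself). -/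
inductive IsSubtree : BinTree → BinTree → Prop
  | refl (t) : IsSubtree t t
  | left {s l r} : IsSubtree s l → IsSubtree s (.node l r)
  | right {s l r} : IsSubtree s r → IsSubtree s (.node l r)

/-- `∑_{v∈μ} lg st_s(v)`: sum over the nodes of `μ` of the log-subtree-sizes
taken in the host tree `s` (for `μ` pruned from `s`). -/
noncomputable def mixedEntropy : BinTree → BinTree → ℝ
  | .leaf, _ => 0
  | .node _ _, .leaf => 0
  | .node l' r', .node l r =>
      Real.logb 2 ((BinTree.node l r).size : ℝ) + mixedEntropy l' l + mixedEntropy r' r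

/-- 1-based preorder index of the node at a position (0 if no node there). -/
def preorderIdx : BinTree → List Bool → ℕ
  | _, [] => 1
  | .leaf, _ :: _ => 0
  | .node l _, false :: p => 1 + preorderIdx l p
  | .node l r, true :: p => 1 + l.size + preorderIdx r p

/-- 1-based inorder index of the node at a position. -/
def inorderIdx : BinTree → List Bool → ℕ
  | t, [] => t.leftSize + 1
  | .leaf, _ :: _ => 0
  | .node l _, false :: p => inorderIdx l p
  | .node l r, true :: p => l.size + 1 + inorderIdx r p

/-- Binary entropy function (base 2). -/
noncomputable def binH (x : ℝ) : ℝ := -x * Real.logb 2 x - (1 - x) * Real.logb 2 (1 - x)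
section AuxMin

lemma foldl_min_le_init (a : ℕ) (l : List ℕ) : List.foldl min a l ≤ a := by
  induction l generalizing a with
  | nil => simp
  | cons b t ih =>
    simp only [List.foldl_cons]
    exact le_trans (ih (min a b)) (min_le_left a b)

lemma foldl_min_le_mem {x : ℕ} (a : ℕ) {l : List ℕ} (h : x ∈ l) :
    List.foldl min a l ≤ x := by
  induction l generalizing a with
  | nil => simp at h
  | cons b t ih =>
    simp only [List.foldl_cons]
    rcases List.mem_cons.mp h with rfl | h
    · exact le_trans (foldl_min_le_init _ _) (min_le_right a x)
    · exact ih _ h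

lemma foldl_min_eq_init_or_mem (a : ℕ) (l : List ℕ) :
    List.foldl min a l = a ∨ List.foldl min a l ∈ l := by
  induction l generalizing a with
  | nil => simp
  | cons b t ih =>
    simp only [List.foldl_cons]
    rcases ih (min a b) with h | h
    · rcases min_cases a b with ⟨h1, _⟩ | ⟨h1, _⟩
      · left; rw [h, h1]
      · right; rw [h, h1]; exact List.mem_cons_self
    · right; exact List.mem_cons_of_mem _ h

lemma foldl_min_mem_cons (x : ℕ) (xs : List ℕ) : List.foldl min x xs ∈ x :: xs := by
  rcases foldl_min_eq_init_or_mem x xs with h | h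
  · rw [h]; exact List.mem_cons_self
  · exact List.mem_cons_of_mem _ h

lemma foldl_min_le_cons {y : ℕ} (x : ℕ) (xs : List ℕ) (h : y ∈ x :: xs) :
    List.foldl min x xs ≤ y := by
  rcases List.mem_cons.mp h with rfl | h
  · exact foldl_min_le_init _ _
  · exact foldl_min_le_mem _ h

lemma foldl_min_headD {l : List ℕ} {v : ℕ} (hv : v ∈ l) (hle : ∀ x ∈ l, v ≤ x) :
    List.foldl min (l.headD 0) l = v := by
  obtain ⟨x, xs, rfl⟩ := List.exists_cons_of_ne_nil (List.ne_nil_of_mem hv)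
  simp only [List.headD_cons]
  have h1 : List.foldl min x (x :: xs) ≤ v := foldl_min_le_mem _ hv
  have h2 : v ≤ List.foldl min x (x :: xs) := hle _ (by
    rcases foldl_min_eq_init_or_mem x (x :: xs) with h | h
    · rw [h]; exact List.mem_cons_self
    · exact h)
  omega

end AuxMin

section AuxCart

lemma cartesianAux_congr : ∀ (f1 : ℕ), ∀ (l : List ℕ) (f2 : ℕ), l.length ≤ f1 → l.length ≤ f2 →
    cartesianAux f1 l = cartesianAux f2 l := by
  intro f1
  induction f1 with
  | zero =>
    intro l f2 h1 _
    have : l = [] := List.eq_nil_of_length_eq_zero (Nat.le_zero.mp h1)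
    subst this
    cases f2 <;> rfl
  | succ f ih =>
    intro l f2 h1 h2
    cases l with
    | nil => cases f2 <;> rfl
    | cons x xs =>
      simp only [List.length_cons] at h1 h2
      obtain ⟨g, rfl⟩ : ∃ g, f2 = g + 1 := ⟨f2 - 1, by omega⟩
      simp only [cartesianAux]
      have hm : List.foldl min x xs ∈ x :: xs := foldl_min_mem_cons x xs
      have hi : (x :: xs).idxOf (List.foldl min x xs) < (x :: xs).length :=
        List.idxOf_lt_length_iff.mpr hm
      simp only [List.length_cons] at hi
      have ltk : ((x :: xs).take ((x :: xs).idxOf (List.foldl min x xs))).length ≤ xs.length := by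
        rw [List.length_take]; simp only [List.length_cons]; omega
      have ldr : ((x :: xs).drop ((x :: xs).idxOf (List.foldl min x xs) + 1)).length ≤ xs.length := by
        rw [List.length_drop]; simp only [List.length_cons]; omega
      rw [ih _ g (by omega) (by omega), ih _ g (by omega) (by omega)]

lemma cartesianAux_eq {fuel : ℕ} {l : List ℕ} (h : l.length ≤ fuel) :
    cartesianAux fuel l = cartesian l :=
  cartesianAux_congr fuel l l.length h le_rfl

lemma cartesian_cons (x : ℕ) (xs : List ℕ) :
    cartesian (x :: xs) =
      .node (cartesian ((x :: xs).take ((x :: xs).idxOf (List.foldl min x xs))))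
            (cartesian ((x :: xs).drop ((x :: xs).idxOf (List.foldl min x xs) + 1))) := by
  have hm : List.foldl min x xs ∈ x :: xs := foldl_min_mem_cons x xs
  have hi : (x :: xs).idxOf (List.foldl min x xs) < (x :: xs).length :=
    List.idxOf_lt_length_iff.mpr hm
  simp only [List.length_cons] at hi
  conv_lhs => rw [cartesian]
  simp only [List.length_cons, cartesianAux]
  rw [cartesianAux_eq (by rw [List.length_take]; simp only [List.length_cons]; omega),
      cartesianAux_eq (by rw [List.length_drop]; simp only [List.length_cons]; omega)]

lemma size_cartesian : ∀ (n : ℕ) (l : List ℕ), l.length ≤ n → (cartesian l).size = l.length := by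
  intro n
  induction n with
  | zero =>
    intro l h
    have : l = [] := List.eq_nil_of_length_eq_zero (Nat.le_zero.mp h)
    subst this; rfl
  | succ n ih =>
    intro l h
    cases l with
    | nil => rfl
    | cons x xs =>
      rw [cartesian_cons]
      have hm : List.foldl min x xs ∈ x :: xs := foldl_min_mem_cons x xs
      have hi : (x :: xs).idxOf (List.foldl min x xs) < (x :: xs).length :=
        List.idxOf_lt_length_iff.mpr hm
      simp only [List.length_cons] at hi h
      rw [BinTree.size,
        ih _ (by rw [List.length_take]; simp only [List.length_cons]; omega),
        ih _ (by rw [List.length_drop]; simp only [List.length_cons]; omega)]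
      rw [List.length_take, List.length_drop]
      simp only [List.length_cons]
      omega

lemma size_cartesian' (l : List ℕ) : (cartesian l).size = l.length :=
  size_cartesian l.length l le_rfl

end AuxCart
section AuxRmq

lemma rmq_take (A : List ℕ) (i0 i j : ℕ) (h1 : 1 ≤ i) (hij : i ≤ j) (hj : j ≤ i0) :
    rmqFun (A.take i0) i j = rmqFun A i j := by
  simp only [rmqFun]
  rw [List.drop_take, List.take_take, min_eq_left (show j - i + 1 ≤ i0 - (i - 1) by omega)]

lemma rmq_drop (A : List ℕ) (m i j : ℕ) (hm : m < i) (hij : i ≤ j) :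
    rmqFun A i j = m + rmqFun (A.drop m) (i - m) (j - m) := by
  simp only [rmqFun]
  rw [List.drop_drop]
  have h1 : m + (i - m - 1) = i - 1 := by omega
  have h2 : j - m - (i - m) + 1 = j - i + 1 := by omega
  rw [h1, h2]
  omega

lemma rmq_mid (x : ℕ) (xs : List ℕ) (hnd : (x :: xs).Nodup) (i j : ℕ)
    (h1 : 1 ≤ i) (hj : j ≤ (x :: xs).length)
    (hi : i ≤ (x :: xs).idxOf (List.foldl min x xs) + 1)
    (hj2 : (x :: xs).idxOf (List.foldl min x xs) + 1 ≤ j) :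
    rmqFun (x :: xs) i j = (x :: xs).idxOf (List.foldl min x xs) + 1 := by
  set A := x :: xs with hA
  set v := List.foldl min x xs with hv
  set i0 := A.idxOf v with hi0
  have hmem : v ∈ A := foldl_min_mem_cons x xs
  have hi0lt : i0 < A.length := List.idxOf_lt_length_iff.mpr hmem
  set s := (A.drop (i - 1)).take (j - i + 1) with hs
  have hslen : s.length = j - i + 1 := by
    rw [hs, List.length_take, List.length_drop]
    omega
  have hsub : s.Sublist A :=
    (List.take_sublist _ _).trans (List.drop_sublist _ _)
  have hk : i0 - (i - 1) < s.length := by omega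
  have hsk : s[i0 - (i - 1)]'hk = v := by
    simp only [hs, List.getElem_take, List.getElem_drop]
    have : i - 1 + (i0 - (i - 1)) = i0 := by omega
    simp only [this]
    exact List.getElem_idxOf hi0lt
  have hvmem : v ∈ s := by
    rw [← hsk]; exact List.getElem_mem _
  have hle : ∀ y ∈ s, v ≤ y := fun y hy => foldl_min_le_cons x xs (hsub.mem hy)
  have hfold : List.foldl min (s.headD 0) s = v := foldl_min_headD hvmem hle
  have hnds : s.Nodup := hnd.sublist hsub
  have hidx : s.idxOf v = i0 - (i - 1) := by
    rw [← hsk]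
    exact List.Nodup.idxOf_getElem hnds _ hk
  simp only [rmqFun, ← hs, hfold, hidx]
  omega

end AuxRmq
section AuxMain

lemma rmq_eq_lca : ∀ (n : ℕ) (A : List ℕ), A.length ≤ n → A.Nodup →
    ∀ i j : ℕ, 1 ≤ i → i ≤ j → j ≤ A.length →
    rmqFun A i j = lcaInorder (cartesian A) i j := by
  intro n
  induction n with
  | zero =>
    intro A hlen _ i j h1 hij hj
    omega
  | succ n ih =>
    intro A hlen hnd i j h1 hij hj
    cases A with
    | nil => simp only [List.length_nil] at hj; omega
    | cons x xs =>
      have hm : List.foldl min x xs ∈ x :: xs := foldl_min_mem_cons x xs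
      have hi0lt : (x :: xs).idxOf (List.foldl min x xs) < (x :: xs).length :=
        List.idxOf_lt_length_iff.mpr hm
      set i0 := (x :: xs).idxOf (List.foldl min x xs) with hi0
      simp only [List.length_cons] at hi0lt hlen hj
      rw [cartesian_cons]
      have hLsize : (cartesian ((x :: xs).take i0)).size = i0 := by
        rw [size_cartesian', List.length_take]
        simp only [List.length_cons]; omega
      simp only [lcaInorder, hLsize, ← hi0]
      split_ifs with hc1 hc2
      · rw [← rmq_take (x :: xs) i0 i j h1 hij (by omega)]
        apply ih _ (by rw [List.length_take]; simp only [List.length_cons]; omega)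
          (hnd.sublist (List.take_sublist _ _)) i j h1 hij
        rw [List.length_take]; simp only [List.length_cons]; omega
      · rw [rmq_drop (x :: xs) (i0 + 1) i j (by omega) hij]
        congr 1
        apply ih _ (by rw [List.length_drop]; simp only [List.length_cons]; omega)
          (hnd.sublist (List.drop_sublist _ _)) _ _ (by omega) (by omega)
        rw [List.length_drop]; simp only [List.length_cons]; omega
      · exact rmq_mid x xs hnd i j h1 (by simp only [List.length_cons]; omega)
          (by omega) (by omega)

lemma size_eq_zero_iff {t : BinTree} (h : t.size = 0) : t = .leaf := by
  cases t with
  | leaf => rfl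
  | node l r => simp [BinTree.size] at h

lemma lca_ext : ∀ (s : BinTree) (n : ℕ) (t : BinTree), s.size = n → t.size = n →
    (∀ i j : ℕ, 1 ≤ i → i ≤ j → j ≤ n → lcaInorder s i j = lcaInorder t i j) → s = t := by
  intro s
  induction s with
  | leaf =>
    intro n t hs ht _
    exact (size_eq_zero_iff (by rw [ht, ← hs]; rfl)).symm
  | node ls rs ihl ihr =>
    intro n t hs ht h
    cases t with
    | leaf =>
      exfalso
      simp only [BinTree.size] at hs ht
      rw [← ht] at hs
      omega
    | node lt rt =>
      simp only [BinTree.size] at hs ht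
      have hn1 : 1 ≤ n := by omega
      have hroot := h 1 n le_rfl hn1 le_rfl
      simp only [lcaInorder] at hroot
      rw [if_neg (by omega), if_neg (by omega), if_neg (by omega), if_neg (by omega)] at hroot
      have hls : ls.size = lt.size := by omega
      have hrs : rs.size = rt.size := by omega
      have hL : ls = lt := by
        apply ihl ls.size lt rfl hls.symm
        intro i j h1 hij hj
        have h' := h i j h1 hij (by omega)
        simp only [lcaInorder, ← hls] at h'
        rw [if_pos (⟨by omega, by omega⟩ : i < ls.size + 1 ∧ j < ls.size + 1),
            if_pos (⟨by omega, by omega⟩ : i < ls.size + 1 ∧ j < ls.size + 1)] at h'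
        exact h'
      have hR : rs = rt := by
        apply ihr rs.size rt rfl hrs.symm
        intro i j h1 hij hj
        have h' := h (i + (ls.size + 1)) (j + (ls.size + 1)) (by omega) (by omega) (by omega)
        simp only [lcaInorder, ← hls] at h'
        have hc1 : ¬(i + (ls.size + 1) < ls.size + 1 ∧ j + (ls.size + 1) < ls.size + 1) := by
          omega
        have hc2 : ls.size + 1 < i + (ls.size + 1) ∧ ls.size + 1 < j + (ls.size + 1) := by
          omega
        simp only [if_neg hc1, if_pos hc2, Nat.add_sub_cancel] at h'
        omega
      rw [hL, hR]

end AuxMain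
section AuxBuild

def buildL : BinTree → ℕ → List ℕ
  | .leaf, _ => []
  | .node l r, b => buildL l (b + 1) ++ b :: buildL r (b + 1 + l.size)

lemma length_buildL : ∀ (t : BinTree) (b : ℕ), (buildL t b).length = t.size := by
  intro t
  induction t with
  | leaf => intro b; rfl
  | node l r ihl ihr =>
    intro b
    simp only [buildL, List.length_append, List.length_cons, ihl, ihr, BinTree.size]
    omega

lemma mem_buildL : ∀ (t : BinTree) (b : ℕ), ∀ x ∈ buildL t b, b ≤ x ∧ x < b + t.size := by
  intro t
  induction t with
  | leaf => intro b x hx; simp [buildL] at hx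
  | node l r ihl ihr =>
    intro b x hx
    simp only [buildL, List.mem_append, List.mem_cons] at hx
    simp only [BinTree.size]
    rcases hx with hx | rfl | hx
    · have := ihl (b + 1) x hx; omega
    · omega
    · have := ihr (b + 1 + l.size) x hx; omega

lemma nodup_buildL : ∀ (t : BinTree) (b : ℕ), (buildL t b).Nodup := by
  intro t
  induction t with
  | leaf => intro b; exact List.nodup_nil
  | node l r ihl ihr =>
    intro b
    simp only [buildL]
    rw [List.nodup_append]
    refine ⟨ihl _, ?_, ?_⟩
    · rw [List.nodup_cons]
      refine ⟨fun hb => ?_, ihr _⟩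
      have := mem_buildL r (b + 1 + l.size) b hb
      omega
    · intro x hx y hx2 hxy
      subst hxy
      have h1 := mem_buildL l (b + 1) x hx
      rcases List.mem_cons.mp hx2 with rfl | hx3
      · omega
      · have := mem_buildL r (b + 1 + l.size) x hx3
        omega

lemma cartesian_ne_nil {l : List ℕ} (h : l ≠ []) :
    cartesian l = .node (cartesian (l.take (l.idxOf (List.foldl min (l.headD 0) l))))
                        (cartesian (l.drop (l.idxOf (List.foldl min (l.headD 0) l) + 1))) := by
  obtain ⟨x, xs, rfl⟩ := List.exists_cons_of_ne_nil h
  have hf : List.foldl min ((x :: xs).headD 0) (x :: xs) = List.foldl min x xs := by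
    simp [List.foldl_cons, min_self]
  rw [hf]
  exact cartesian_cons x xs

lemma cartesian_buildL : ∀ (t : BinTree) (b : ℕ), cartesian (buildL t b) = t := by
  intro t
  induction t with
  | leaf => intro b; rfl
  | node l r ihl ihr =>
    intro b
    have hlst : buildL (BinTree.node l r) b = buildL l (b + 1) ++ b :: buildL r (b + 1 + l.size) :=
      rfl
    set L := buildL l (b + 1) with hLd
    set R := buildL r (b + 1 + l.size) with hRd
    have hne : L ++ b :: R ≠ [] := by simp
    have hbmem : b ∈ L ++ b :: R := by simp
    have hble : ∀ x ∈ L ++ b :: R, b ≤ x := by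
      intro x hx
      rcases List.mem_append.mp hx with hx | hx
      · have := mem_buildL l (b + 1) x hx; omega
      · rcases List.mem_cons.mp hx with rfl | hx
        · exact le_rfl
        · have := mem_buildL r (b + 1 + l.size) x hx; omega
    have hfold : List.foldl min ((L ++ b :: R).headD 0) (L ++ b :: R) = b :=
      foldl_min_headD hbmem hble
    have hbnotL : b ∉ L := by
      intro hb
      have := mem_buildL l (b + 1) b hb
      omega
    have hidx : (L ++ b :: R).idxOf b = l.size := by
      rw [List.idxOf_append_of_notMem hbnotL, List.idxOf_cons_self]
      rw [hLd, length_buildL]; omega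
    rw [hlst, cartesian_ne_nil hne, hfold, hidx]
    have htake : (L ++ b :: R).take l.size = L := by
      rw [← length_buildL l (b + 1), ← hLd, List.take_left]
    have hdrop : (L ++ b :: R).drop (l.size + 1) = R := by
      have : L ++ b :: R = (L ++ [b]) ++ R := by simp
      rw [this]
      have hlen : l.size + 1 = (L ++ [b]).length := by
        rw [List.length_append, List.length_cons, List.length_nil, hLd, length_buildL]
      rw [hlen, List.drop_left]
    rw [htake, hdrop, ihl, ihr]

end AuxBuild

/-- The Cartesian tree induces a bijection between RMQ answer functions of
length-`n` arrays with distinct entries and binary trees with `n` nodes: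
two arrays have the same answer function iff they have the same Cartesian tree,
and every binary tree on `n` nodes arises; moreover `rmq_A(i,j)` equals the
inorder rank of the LCA of the nodes with inorder ranks `i` and `j` in the
Cartesian tree of `A`. -/
theorem stmt9 (n : ℕ) :
    (∀ A B : List ℕ, A.length = n → B.length = n → A.Nodup → B.Nodup →
      ((∀ i j : ℕ, 1 ≤ i → i ≤ j → j ≤ n → rmqFun A i j = rmqFun B i j)
        ↔ cartesian A = cartesian B))
    ∧ (∀ t : BinTree, t.size = n →
        ∃ A : List ℕ, A.length = n ∧ A.Nodup ∧ cartesian A = t)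
    ∧ (∀ A : List ℕ, A.length = n → A.Nodup →
        ∀ i j : ℕ, 1 ≤ i → i ≤ j → j ≤ n →
          rmqFun A i j = lcaInorder (cartesian A) i j) := by
  refine ⟨?_, ?_, ?_⟩
  · intro A B hA hB hndA hndB
    constructor
    · intro h
      apply lca_ext (cartesian A) n (cartesian B) (by rw [size_cartesian', hA])
        (by rw [size_cartesian', hB])
      intro i j h1 hij hj
      rw [← rmq_eq_lca A.length A le_rfl hndA i j h1 hij (by omega),
          ← rmq_eq_lca B.length B le_rfl hndB i j h1 hij (by omega)]
      exact h i j h1 hij hj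
    · intro hc i j h1 hij hj
      rw [rmq_eq_lca A.length A le_rfl hndA i j h1 hij (by omega),
          rmq_eq_lca B.length B le_rfl hndB i j h1 hij (by omega), hc]
  · intro t ht
    exact ⟨buildL t 0, by rw [length_buildL, ht], nodup_buildL t 0, cartesian_buildL t 0⟩
  · intro A hA hnd i j h1 hij hj
    exact rmq_eq_lca A.length A le_rfl hnd i j h1 hij (by omega)
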